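/- For a 5×5 skew-symmetric matrix M with entries in a commutative ring, the vector of signed 4×4 Pfaffians (P₁, −P₂, P₃, −P₄, P₅), where P_i is the Pfaffian of M with row and column i deleted, satisfies M · (P₁, −P₂, P₃, −P₄, P₅)ᵗ = 0; in particular, the columns of M furnish linear syzygies among the five Pfaffians. -/
import Mathlib


/-- The Pfaffian of a 4×4 skew-symmetric matrix `(a_{ij})`:
`a₁₂a₃₄ − a₁₃a₂₄ + a₁₄a₂₃`. -/
def pf4 {R : Type*} [CommRing R] (A : Matrix (Fin 4) (Fin 4) R) : R :=
  A 0 1 * A 2 3 - A 0 2 * A 1 3 + A 0 3 * A 1 2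

/-- Buchsbaum–Eisenbud: for a 5×5 skew-symmetric matrix `M` over a commutative ring, the
vector of signed 4×4 Pfaffians `(P₁, −P₂, P₃, −P₄, P₅)`, where `Pᵢ` is the Pfaffian of
`M` with row and column `i` deleted, is in the kernel of `M`: the columns of `M` give
linear syzygies among the five Pfaffians. -/
theorem skew5_pfaffian_syzygies (R : Type*) [CommRing R] (M : Matrix (Fin 5) (Fin 5) R)
    (hskew : ∀ i j, M i j = -M j i) (hdiag : ∀ i, M i i = 0) :
    ∀ i, ∑ j, M i j * ((-1 : R) ^ (j : ℕ) * pf4 (M.submatrix j.succAbove j.succAbove))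
      = 0 := by
  intro i
  fin_cases i <;>
  · simp only [Fin.sum_univ_five, Matrix.submatrix_apply, pf4,
      (show ((0:Fin 5).succAbove 0) = 1 from rfl),
      (show ((0:Fin 5).succAbove 1) = 2 from rfl),
      (show ((0:Fin 5).succAbove 2) = 3 from rfl),
      (show ((0:Fin 5).succAbove 3) = 4 from rfl),
      (show ((1:Fin 5).succAbove 0) = 0 from rfl),
      (show ((1:Fin 5).succAbove 1) = 2 from rfl),
      (show ((1:Fin 5).succAbove 2) = 3 from rfl),
      (show ((1:Fin 5).succAbove 3) = 4 from rfl),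
      (show ((2:Fin 5).succAbove 0) = 0 from rfl),
      (show ((2:Fin 5).succAbove 1) = 1 from rfl),
      (show ((2:Fin 5).succAbove 2) = 3 from rfl),
      (show ((2:Fin 5).succAbove 3) = 4 from rfl),
      (show ((3:Fin 5).succAbove 0) = 0 from rfl),
      (show ((3:Fin 5).succAbove 1) = 1 from rfl),
      (show ((3:Fin 5).succAbove 2) = 2 from rfl),
      (show ((3:Fin 5).succAbove 3) = 4 from rfl),
      (show ((4:Fin 5).succAbove 0) = 0 from rfl),
      (show ((4:Fin 5).succAbove 1) = 1 from rfl),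
      (show ((4:Fin 5).succAbove 2) = 2 from rfl),
      (show ((4:Fin 5).succAbove 3) = 3 from rfl),
      (show (⟨0, by norm_num⟩ : Fin 5) = 0 from rfl),
      (show (⟨1, by norm_num⟩ : Fin 5) = 1 from rfl),
      (show (⟨2, by norm_num⟩ : Fin 5) = 2 from rfl),
      (show (⟨3, by norm_num⟩ : Fin 5) = 3 from rfl),
      (show (⟨4, by norm_num⟩ : Fin 5) = 4 from rfl),
      (show (((0:Fin 5)):ℕ) = 0 from rfl),
      (show (((1:Fin 5)):ℕ) = 1 from rfl),
      (show (((2:Fin 5)):ℕ) = 2 from rfl),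
      (show (((3:Fin 5)):ℕ) = 3 from rfl),
      (show (((4:Fin 5)):ℕ) = 4 from rfl),
      hdiag]
    try simp only [hskew 1 0, hskew 2 0, hskew 2 1, hskew 3 0, hskew 3 1, hskew 3 2,
        hskew 4 0, hskew 4 1, hskew 4 2, hskew 4 3]
    norm_num
    ring
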